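/- arXiv:1708.03388 — 2 statements merged into one kernel-verified Lean document; each statement's English description precedes it below -/
import Mathlib

section
/- Let α, β > 0 be real numbers with β > α. Then lim_{z → +∞} z^{β−α} e^{−z} · (Γ(α)/Γ(β)) · ₁F₁(α; β; z) = 1, where ₁F₁(α; β; z) = ∑_{m=0}^∞ ((α)_m/(β)_m) z^m/m! is the confluent hypergeometric function and (α)_m = α(α+1)⋯(α+m−1) is the Pochhammer symbol. -/
open Filter MeasureTheory Set intervalIntegral

/-- Rising factorial (Pochhammer symbol) `(x)_m = x(x+1)⋯(x+m−1)`. -/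
noncomputable def poch (x : ℝ) (m : ℕ) : ℝ := ∏ i ∈ Finset.range m, (x + i)

/-- The confluent hypergeometric function `₁F₁(α;β;z)`. -/
noncomputable def oneFone (α β z : ℝ) : ℝ :=
  ∑' m : ℕ, (poch α m / poch β m) * z ^ m / (Nat.factorial m : ℝ)



lemma poch_pos {x : ℝ} (hx : 0 < x) (m : ℕ) : 0 < poch x m :=
  Finset.prod_pos fun i _ => by positivity

lemma poch_le {x y : ℝ} (hx : 0 < x) (hxy : x ≤ y) (m : ℕ) : poch x m ≤ poch y m :=
  Finset.prod_le_prod (fun i _ => by positivity) (fun i _ => by linarith)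

lemma Gamma_poch {x : ℝ} (hx : 0 < x) (m : ℕ) :
    Real.Gamma (x + m) = Real.Gamma x * poch x m := by
  induction m with
  | zero => simp [poch]
  | succ n ih =>
    have h1 : x + (n + 1 : ℕ) = (x + n) + 1 := by push_cast; ring
    rw [h1, Real.Gamma_add_one (by positivity), ih]
    simp only [poch, Finset.prod_range_succ]
    ring

lemma real_beta_integrable {a b : ℝ} (ha : 0 < a) (hb : 0 < b) :
    IntervalIntegrable (fun t : ℝ => t ^ (a - 1) * (1 - t) ^ (b - 1)) volume 0 1 := by
  have hc := Complex.betaIntegral_convergent (u := (a : ℂ)) (v := (b : ℂ))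
    (by simpa using ha) (by simpa using hb)
  have hn := hc.norm
  rw [intervalIntegrable_iff_integrableOn_Ioo_of_le (by norm_num)] at hn ⊢
  refine hn.congr_fun (fun x hx => ?_) measurableSet_Ioo
  obtain ⟨hx0, hx1⟩ := hx
  have h1x : (0:ℝ) < 1 - x := by linarith
  beta_reduce
  rw [norm_mul]
  have e1 : ‖(x : ℂ) ^ ((a : ℂ) - 1)‖ = x ^ (a - 1) := by
    rw [show ((a:ℂ) - 1) = ((a - 1 : ℝ) : ℂ) by push_cast; ring,
      Complex.norm_cpow_eq_rpow_re_of_pos hx0]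
    simp
  have e2 : ‖(1 - (x : ℂ)) ^ ((b : ℂ) - 1)‖ = (1 - x) ^ (b - 1) := by
    rw [show (1 - (x:ℂ)) = (((1 - x : ℝ)) : ℂ) by push_cast; ring,
      show ((b:ℂ) - 1) = ((b - 1 : ℝ) : ℂ) by push_cast; ring,
      Complex.norm_cpow_eq_rpow_re_of_pos h1x]
    simp
  rw [e1, e2]

lemma real_beta {a b : ℝ} (ha : 0 < a) (hb : 0 < b) :
    ∫ t in (0:ℝ)..1, t ^ (a - 1) * (1 - t) ^ (b - 1)
      = Real.Gamma a * Real.Gamma b / Real.Gamma (a + b) := by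
  have key := Complex.Gamma_mul_Gamma_eq_betaIntegral (s := (a : ℂ)) (t := (b : ℂ))
    (by simpa using ha) (by simpa using hb)
  have hBeta : Complex.betaIntegral (a : ℂ) (b : ℂ)
      = ((∫ t in (0:ℝ)..1, t ^ (a - 1) * (1 - t) ^ (b - 1) : ℝ) : ℂ) := by
    rw [Complex.betaIntegral, ← intervalIntegral.integral_ofReal]
    apply intervalIntegral.integral_congr_ae
    have : ∀ᵐ x : ℝ ∂volume, x ∈ Set.uIoc (0:ℝ) 1 → x ≠ 1 := by
      filter_upwards [(Set.countable_singleton (1:ℝ)).ae_notMem volume] with x hx _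
      simpa using hx
    filter_upwards [this] with x hx hmem
    have hx1 : x ≠ 1 := hx hmem
    rw [Set.uIoc_of_le (by norm_num : (0:ℝ) ≤ 1)] at hmem
    obtain ⟨hx0, hx1'⟩ := hmem
    have h1x : (0:ℝ) < 1 - x := lt_of_le_of_ne (by linarith) (by intro h; apply hx1; linarith)
    rw [show ((a:ℂ) - 1) = ((a - 1 : ℝ) : ℂ) by push_cast; ring,
        show ((b:ℂ) - 1) = ((b - 1 : ℝ) : ℂ) by push_cast; ring,
        ← Complex.ofReal_cpow hx0.le, ← Complex.ofReal_one, ← Complex.ofReal_sub,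
        ← Complex.ofReal_cpow h1x.le]
    push_cast
    ring
  rw [hBeta] at key
  have hG : Real.Gamma (a + b) ≠ 0 := (Real.Gamma_pos_of_pos (by linarith)).ne'
  have key2 : (Real.Gamma a * Real.Gamma b : ℂ)
      = (Real.Gamma (a + b) * ∫ t in (0:ℝ)..1, t ^ (a - 1) * (1 - t) ^ (b - 1) : ℝ) := by
    push_cast
    rwa [Complex.Gamma_ofReal, Complex.Gamma_ofReal, ← Complex.ofReal_add,
      Complex.Gamma_ofReal] at key
  rw [show ((Real.Gamma a : ℂ) * (Real.Gamma b : ℂ)) = ((Real.Gamma a * Real.Gamma b : ℝ) : ℂ) by push_cast; ring] at key2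
  have key3 := Complex.ofReal_injective key2
  field_simp
  linarith [key3]

lemma exp_tsum (x : ℝ) : Real.exp x = ∑' n : ℕ, x ^ n / (Nat.factorial n : ℝ) := by
  rw [Real.exp_eq_exp_ℝ, NormedSpace.exp_eq_tsum_div]

lemma series_eq_integral {α β : ℝ} (hα : 0 < α) (hβ : 0 < β) (hab : α < β) {z : ℝ}
    (hz : 0 ≤ z) :
    ∫ t in Ioo (0:ℝ) 1, Real.exp (z * t) * (t ^ (α - 1) * (1 - t) ^ (β - α - 1))
      = (Real.Gamma α * Real.Gamma (β - α) / Real.Gamma β) * oneFone α β z := by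
  set c : ℝ := β - α with hc_def
  have hc : 0 < c := by simp [hc_def]; linarith
  set K : ℝ := Real.Gamma α * Real.Gamma c / Real.Gamma β with hK_def
  set F : ℕ → ℝ → ℝ := fun m t =>
    (z ^ m / (Nat.factorial m : ℝ)) * (t ^ (α + m - 1) * (1 - t) ^ (c - 1)) with hF_def
  have hΓβ : 0 < Real.Gamma β := Real.Gamma_pos_of_pos hβ
  -- integrability of each F m on Ioo 0 1
  have hFint : ∀ m : ℕ, IntegrableOn (F m) (Ioo (0:ℝ) 1) volume := by
    intro m
    have h := real_beta_integrable (a := α + m) (b := c) (by positivity) hc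
    rw [intervalIntegrable_iff_integrableOn_Ioo_of_le (by norm_num)] at h
    exact h.const_mul _
  -- value of each integral
  have hFval : ∀ m : ℕ,
      ∫ t in Ioo (0:ℝ) 1, F m t = K * ((poch α m / poch β m) * z ^ m / (Nat.factorial m : ℝ)) := by
    intro m
    have h1 : ∫ t in Ioo (0:ℝ) 1, F m t
        = (z ^ m / (Nat.factorial m : ℝ)) *
          ∫ t in Ioo (0:ℝ) 1, t ^ (α + m - 1) * (1 - t) ^ (c - 1) := by
      rw [← MeasureTheory.integral_const_mul]
    have h2 : ∫ t in Ioo (0:ℝ) 1, t ^ (α + m - 1) * (1 - t) ^ (c - 1)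
        = Real.Gamma (α + m) * Real.Gamma c / Real.Gamma (α + m + c) := by
      rw [← real_beta (a := α + m) (b := c) (by positivity) hc,
        intervalIntegral.integral_of_le (by norm_num : (0:ℝ) ≤ 1),
        integral_Ioc_eq_integral_Ioo]
    have h3 : α + (m : ℝ) + c = β + m := by rw [hc_def]; ring
    rw [h1, h2, h3, Gamma_poch hα m, Gamma_poch hβ m]
    have hpβ := (poch_pos hβ m).ne'
    rw [hK_def]
    field_simp
  -- pointwise series identity
  have hpt : ∀ t ∈ Ioo (0:ℝ) 1,
      Real.exp (z * t) * (t ^ (α - 1) * (1 - t) ^ (c - 1)) = ∑' m, F m t := by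
    intro t ht
    obtain ⟨ht0, ht1⟩ := ht
    have : ∀ m : ℕ, F m t
        = ((z * t) ^ m / (Nat.factorial m : ℝ)) * (t ^ (α - 1) * (1 - t) ^ (c - 1)) := by
      intro m
      have : t ^ (α + m - 1) = t ^ (m : ℕ) * t ^ (α - 1) := by
        rw [← Real.rpow_natCast t m, ← Real.rpow_add ht0]
        ring_nf
      rw [hF_def]
      simp only [this, mul_pow]
      ring
    rw [tsum_congr this, tsum_mul_right, ← exp_tsum (z * t)]
  rw [setIntegral_congr_fun measurableSet_Ioo hpt]
  -- summability of norms
  have hnorm : ∀ m : ℕ, ∫ t in Ioo (0:ℝ) 1, ‖F m t‖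
      = K * ((poch α m / poch β m) * z ^ m / (Nat.factorial m : ℝ)) := by
    intro m
    rw [← hFval m]
    apply setIntegral_congr_fun measurableSet_Ioo
    intro t ht
    obtain ⟨ht0, ht1⟩ := ht
    have : 0 ≤ F m t := by
      rw [hF_def]
      have h1 : (0:ℝ) ≤ t ^ (α + m - 1) := Real.rpow_nonneg ht0.le _
      have h2 : (0:ℝ) ≤ (1 - t) ^ (c - 1) := Real.rpow_nonneg (by linarith) _
      positivity
    exact Real.norm_of_nonneg this
  have hsum : Summable fun m : ℕ => ∫ t in Ioo (0:ℝ) 1, ‖F m t‖ := by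
    simp only [hnorm]
    refine Summable.of_nonneg_of_le ?_ ?_ ((Real.summable_pow_div_factorial z).mul_left K)
    · intro m
      have := (poch_pos hα m).le
      have := (poch_pos hβ m)
      have hK : 0 ≤ K := by rw [hK_def]; positivity
      positivity
    · intro m
      have hK : 0 ≤ K := by rw [hK_def]; positivity
      apply mul_le_mul_of_nonneg_left _ hK
      rw [div_le_div_iff_of_pos_right (by positivity : (0:ℝ) < (Nat.factorial m : ℝ))]
      have hratio : poch α m / poch β m ≤ 1 :=
        (div_le_one (poch_pos hβ m)).2 (poch_le hα hab.le m)
      have hzm : (0:ℝ) ≤ z ^ m := by positivity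
      calc poch α m / poch β m * z ^ m ≤ 1 * z ^ m :=
            mul_le_mul_of_nonneg_right hratio hzm
        _ = z ^ m := one_mul _
  rw [← integral_tsum_of_summable_integral_norm hFint hsum]
  rw [funext hFval, tsum_mul_left, oneFone]

lemma H_tendsto {α c : ℝ} (hα : 0 < α) (hc : 0 < c) :
    Tendsto (fun z : ℝ =>
        z ^ c * ∫ u in (0:ℝ)..1, Real.exp (-(z * u)) * ((1 - u) ^ (α - 1) * u ^ (c - 1)))
      atTop (nhds (Real.Gamma c)) := by
  set B : ℝ → ℝ := fun u => (1 - u) ^ (α - 1) * u ^ (c - 1) with hB_def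
  have hBnn : ∀ u ∈ Icc (0:ℝ) 1, 0 ≤ B u := by
    intro u hu
    exact mul_nonneg (Real.rpow_nonneg (by linarith [hu.2]) _)
      (Real.rpow_nonneg hu.1 _)
  have hBint : IntervalIntegrable B volume 0 1 := by
    have h := real_beta_integrable hc hα
    have he : B = fun t : ℝ => t ^ (c - 1) * (1 - t) ^ (α - 1) := funext fun u => mul_comm _ _
    rw [he]; exact h
  have hfint : ∀ z : ℝ, IntervalIntegrable (fun u => Real.exp (-(z * u)) * B u) volume 0 1 := by
    intro z
    exact hBint.continuousOn_mul (Continuous.continuousOn (by continuity))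
  have hss1 : uIcc (0:ℝ) (1/2) ⊆ uIcc (0:ℝ) 1 := by
    rw [uIcc_of_le (by norm_num : (0:ℝ) ≤ 1/2), uIcc_of_le (by norm_num : (0:ℝ) ≤ 1)]
    exact Icc_subset_Icc le_rfl (by norm_num)
  have hss2 : uIcc (1/2:ℝ) 1 ⊆ uIcc (0:ℝ) 1 := by
    rw [uIcc_of_le (by norm_num : (1/2:ℝ) ≤ 1), uIcc_of_le (by norm_num : (0:ℝ) ≤ 1)]
    exact Icc_subset_Icc (by norm_num) le_rfl
  have hfint1 : ∀ z : ℝ, IntervalIntegrable (fun u => Real.exp (-(z * u)) * B u) volume 0 (1/2) :=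
    fun z => (hfint z).mono_set hss1
  have hfint2 : ∀ z : ℝ, IntervalIntegrable (fun u => Real.exp (-(z * u)) * B u) volume (1/2) 1 :=
    fun z => (hfint z).mono_set hss2
  -- Part 2 : tail tends to zero
  have part2 : Tendsto (fun z : ℝ =>
      z ^ c * ∫ u in (1/2 : ℝ)..1, Real.exp (-(z * u)) * B u) atTop (nhds 0) := by
    set CB : ℝ := ∫ u in (1/2 : ℝ)..1, B u with hCB_def
    have hCBnn : 0 ≤ CB := intervalIntegral.integral_nonneg (by norm_num)
      (fun u hu => hBnn u ⟨by linarith [hu.1], hu.2⟩)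
    apply squeeze_zero' (g := fun z : ℝ => CB * (z ^ c * Real.exp (-(1/2) * z)))
    · filter_upwards [eventually_ge_atTop (0:ℝ)] with z hz
      exact mul_nonneg (Real.rpow_nonneg hz _) (intervalIntegral.integral_nonneg (by norm_num)
        (fun u hu => mul_nonneg (Real.exp_nonneg _) (hBnn u ⟨by linarith [hu.1], hu.2⟩)))
    · filter_upwards [eventually_ge_atTop (0:ℝ)] with z hz
      have hmono : ∫ u in (1/2 : ℝ)..1, Real.exp (-(z * u)) * B u
          ≤ ∫ u in (1/2 : ℝ)..1, Real.exp (-(1/2) * z) * B u := by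
        apply intervalIntegral.integral_mono_on (by norm_num) (hfint2 z)
          ((hBint.mono_set hss2).const_mul _)
        intro u hu
        apply mul_le_mul_of_nonneg_right _ (hBnn u ⟨by linarith [hu.1], hu.2⟩)
        apply Real.exp_le_exp.2
        nlinarith [hu.1, hu.2]
      rw [intervalIntegral.integral_const_mul] at hmono
      calc z ^ c * ∫ u in (1/2 : ℝ)..1, Real.exp (-(z * u)) * B u
          ≤ z ^ c * (Real.exp (-(1/2) * z) * CB) :=
            mul_le_mul_of_nonneg_left hmono (Real.rpow_nonneg hz _)
        _ = CB * (z ^ c * Real.exp (-(1/2) * z)) := by ring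
    · have := tendsto_rpow_mul_exp_neg_mul_atTop_nhds_zero c (1/2) (by norm_num)
      simpa using this.const_mul CB
  -- Part 1 : main term, via dominated convergence after substitution
  set MK : ℝ := max ((1/2 : ℝ) ^ (α - 1)) 1 with hMK_def
  have hMK1 : (1:ℝ) ≤ MK := le_max_right _ _
  have hMKnn : (0:ℝ) ≤ MK := by linarith
  set G : ℝ → ℝ → ℝ := fun z =>
    indicator (Ioc (0:ℝ) (z/2)) (fun s => Real.exp (-s) * ((1 - s/z) ^ (α - 1) * s ^ (c - 1)))
    with hG_def
  set bound : ℝ → ℝ :=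
    indicator (Ioi (0:ℝ)) (fun s => MK * (Real.exp (-s) * s ^ (c - 1))) with hbound_def
  set limf : ℝ → ℝ :=
    indicator (Ioi (0:ℝ)) (fun s => Real.exp (-s) * s ^ (c - 1)) with hlimf_def
  have hrpow_bound : ∀ {x : ℝ}, 1/2 ≤ x → x ≤ 1 → x ^ (α - 1) ≤ MK := by
    intro x h1 h2
    rcases le_or_gt 1 α with hα1 | hα1
    · exact le_trans (Real.rpow_le_one (by linarith) h2 (by linarith)) hMK1
    · exact le_trans (Real.rpow_le_rpow_of_nonpos (by norm_num) h1 (by linarith))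
        (le_max_left _ _)
  have part1 : Tendsto (fun z : ℝ => ∫ s, G z s) atTop (nhds (Real.Gamma c)) := by
    have hlim_int : ∫ s, limf s = Real.Gamma c := by
      rw [hlimf_def, MeasureTheory.integral_indicator measurableSet_Ioi,
        ← Real.Gamma_eq_integral hc]
    rw [← hlim_int]
    apply MeasureTheory.tendsto_integral_filter_of_dominated_convergence bound
    · filter_upwards [eventually_gt_atTop (0:ℝ)] with z hz
      simp only [hG_def]
      rw [aestronglyMeasurable_indicator_iff measurableSet_Ioc]
      apply ContinuousOn.aestronglyMeasurable _ measurableSet_Ioc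
      apply ContinuousOn.mul (Continuous.continuousOn (by continuity))
      apply ContinuousOn.mul
      · apply ContinuousOn.rpow_const
          ((continuous_const.sub (continuous_id.div_const z)).continuousOn)
        intro s hs
        left
        have h2 : s / z ≤ 1/2 := by rw [div_le_iff₀ hz]; linarith [hs.2]
        simp only [id]
        intro hcon
        simp only [Pi.sub_apply, sub_eq_zero] at hcon
        rw [← hcon] at h2
        norm_num at h2
      · apply ContinuousOn.rpow_const continuousOn_id
        intro s hs
        exact Or.inl (ne_of_gt hs.1)
    · filter_upwards [eventually_gt_atTop (0:ℝ)] with z hz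
      filter_upwards with s
      by_cases hs : s ∈ Ioc (0:ℝ) (z/2)
      · have hGe : G z s = Real.exp (-s) * ((1 - s/z) ^ (α - 1) * s ^ (c - 1)) :=
          indicator_of_mem hs _
        rw [hGe]
        obtain ⟨hs0, hs2⟩ := hs
        have hd0 : 0 ≤ s / z := by positivity
        have hd2 : s / z ≤ 1/2 := by rw [div_le_iff₀ hz]; linarith
        have hx1 : 1/2 ≤ 1 - s / z := by linarith
        have hx2 : 1 - s / z ≤ 1 := by linarith
        have hb1 : (1 - s/z) ^ (α - 1) ≤ MK := hrpow_bound hx1 hx2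
        have hA : (0:ℝ) ≤ (1 - s/z) ^ (α - 1) := Real.rpow_nonneg (by linarith) _
        have hsc : (0:ℝ) ≤ s ^ (c-1) := Real.rpow_nonneg hs0.le _
        have hnn : 0 ≤ Real.exp (-s) * ((1 - s/z) ^ (α - 1) * s ^ (c - 1)) := by positivity
        rw [Real.norm_of_nonneg hnn]
        have hbe : bound s = MK * (Real.exp (-s) * s ^ (c - 1)) :=
          indicator_of_mem (mem_Ioi.2 hs0) _
        rw [hbe]
        calc Real.exp (-s) * ((1 - s/z) ^ (α - 1) * s ^ (c - 1))
            ≤ Real.exp (-s) * (MK * s ^ (c - 1)) := by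
              apply mul_le_mul_of_nonneg_left _ (Real.exp_nonneg _)
              exact mul_le_mul_of_nonneg_right hb1 hsc
          _ = MK * (Real.exp (-s) * s ^ (c - 1)) := by ring
      · have hGe : G z s = 0 := indicator_of_notMem hs _
        rw [hGe, norm_zero]
        by_cases hs' : s ∈ Ioi (0:ℝ)
        · have hbe : bound s = MK * (Real.exp (-s) * s ^ (c - 1)) := indicator_of_mem hs' _
          rw [hbe]
          have : (0:ℝ) ≤ s ^ (c-1) := Real.rpow_nonneg (le_of_lt hs') _
          positivity
        · have hbe : bound s = 0 := indicator_of_notMem hs' _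
          rw [hbe]
    · simp only [hbound_def]
      rw [integrable_indicator_iff measurableSet_Ioi]
      exact (Real.GammaIntegral_convergent hc).const_mul MK
    · filter_upwards with s
      rcases le_or_gt s 0 with hs | hs
      · have hGz : ∀ z : ℝ, G z s = 0 := fun z =>
          indicator_of_notMem (fun hmem => absurd hmem.1 (not_lt.2 hs)) _
        have hls : limf s = 0 := indicator_of_notMem (by simpa using hs) _
        simp only [hGz, hls]
        exact tendsto_const_nhds
      · have hls : limf s = Real.exp (-s) * s ^ (c - 1) :=
          indicator_of_mem (mem_Ioi.2 hs) _
        have h1 : Tendsto (fun z : ℝ => s / z) atTop (nhds 0) :=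
          tendsto_const_nhds.div_atTop tendsto_id
        have h2 : Tendsto (fun z : ℝ => (1 - s / z) ^ (α - 1)) atTop (nhds 1) := by
          have hone : Tendsto (fun z : ℝ => 1 - s / z) atTop (nhds 1) := by
            have := (tendsto_const_nhds (x := (1:ℝ))).sub h1
            simpa using this
          have := hone.rpow_const (p := α - 1) (Or.inl one_ne_zero)
          simpa using this
        have h3 : Tendsto (fun z : ℝ =>
            Real.exp (-s) * ((1 - s / z) ^ (α - 1) * s ^ (c - 1))) atTop
            (nhds (Real.exp (-s) * (1 * s ^ (c - 1)))) :=
          tendsto_const_nhds.mul (h2.mul tendsto_const_nhds)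
        rw [hls]
        apply Tendsto.congr' _ (by simpa using h3)
        filter_upwards [eventually_ge_atTop (2 * s)] with z hz
        exact (indicator_of_mem (show s ∈ Ioc (0:ℝ) (z/2) from ⟨hs, by linarith⟩)
          (fun s => Real.exp (-s) * ((1 - s / z) ^ (α - 1) * s ^ (c - 1)))).symm
  -- substitution : z^c * ∫_0^{1/2} = ∫ G z
  have hsub : ∀ᶠ z : ℝ in atTop,
      ∫ s, G z s = z ^ c * ∫ u in (0:ℝ)..(1/2), Real.exp (-(z * u)) * B u := by
    filter_upwards [eventually_gt_atTop (0:ℝ)] with z hz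
    have hz' : z ≠ 0 := hz.ne'
    set g : ℝ → ℝ := fun u => Real.exp (-(z * u)) * ((1 - u) ^ (α - 1) * (z * u) ^ (c - 1))
      with hg_def
    have e0 : ∫ s, G z s
        = ∫ s in (0:ℝ)..(z/2), Real.exp (-s) * ((1 - s/z) ^ (α - 1) * s ^ (c - 1)) := by
      rw [intervalIntegral.integral_of_le (by positivity : (0:ℝ) ≤ z/2)]
      exact MeasureTheory.integral_indicator measurableSet_Ioc
    have e1 : ∀ s : ℝ, Real.exp (-s) * ((1 - s/z) ^ (α - 1) * s ^ (c - 1)) = g (s / z) := by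
      intro s
      simp only [hg_def, mul_comm z (s/z), div_mul_cancel₀ s hz']
    have e2 : ∫ s in (0:ℝ)..(z/2), g (s / z) = z • ∫ u in (0:ℝ)..(1/2), g u := by
      have h := intervalIntegral.integral_comp_div (a := 0) (b := z/2) (c := z) (f := g) hz'
      rw [show (0:ℝ)/z = 0 by simp, show (z/2)/z = 1/2 by field_simp <;> ring] at h
      exact h
    have e3 : ∫ u in (0:ℝ)..(1/2), g u
        = z ^ (c-1) * ∫ u in (0:ℝ)..(1/2), Real.exp (-(z * u)) * B u := by
      rw [← intervalIntegral.integral_const_mul]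
      apply intervalIntegral.integral_congr
      intro u hu
      rw [uIcc_of_le (by norm_num : (0:ℝ) ≤ 1/2)] at hu
      simp only [hg_def, hB_def]
      rw [Real.mul_rpow hz.le hu.1]
      ring
    rw [e0]
    simp_rw [e1]
    rw [e2, e3, smul_eq_mul]
    rw [show z * (z ^ (c-1) * ∫ u in (0:ℝ)..(1/2), Real.exp (-(z*u)) * B u)
      = (z * z ^ (c-1)) * ∫ u in (0:ℝ)..(1/2), Real.exp (-(z*u)) * B u by ring]
    congr 1
    rw [Real.rpow_sub hz, Real.rpow_one]
    field_simp
  -- combine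
  have comb : Tendsto (fun z : ℝ =>
      z ^ c * (∫ u in (0:ℝ)..(1/2), Real.exp (-(z*u)) * B u)
      + z ^ c * (∫ u in (1/2 : ℝ)..1, Real.exp (-(z*u)) * B u)) atTop
      (nhds (Real.Gamma c)) := by
    have := (part1.congr' hsub).add part2
    simpa using this
  apply Tendsto.congr' _ comb
  filter_upwards with z
  rw [← mul_add, intervalIntegral.integral_add_adjacent_intervals (hfint1 z) (hfint2 z)]

/-- Leading asymptotics of `₁F₁`:
`z^{β−α} e^{−z} (Γ(α)/Γ(β)) ₁F₁(α;β;z) → 1` as `z → +∞`. -/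
theorem oneFone_asymptotic (α β : ℝ) (hα : 0 < α) (hβ : 0 < β) (hab : α < β) :
    Tendsto (fun z : ℝ =>
        z ^ (β - α) * Real.exp (-z) * (Real.Gamma α / Real.Gamma β) * oneFone α β z)
      atTop (nhds 1) := by
  set c : ℝ := β - α with hc_def
  have hc : 0 < c := by rw [hc_def]; linarith
  have hΓα : 0 < Real.Gamma α := Real.Gamma_pos_of_pos hα
  have hΓβ : 0 < Real.Gamma β := Real.Gamma_pos_of_pos hβ
  have hΓc : 0 < Real.Gamma c := Real.Gamma_pos_of_pos hc
  have main : Tendsto (fun z : ℝ => (Real.Gamma c)⁻¹ *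
      (z ^ c * ∫ u in (0:ℝ)..1, Real.exp (-(z * u)) * ((1 - u) ^ (α - 1) * u ^ (c - 1))))
      atTop (nhds ((Real.Gamma c)⁻¹ * Real.Gamma c)) :=
    (H_tendsto hα hc).const_mul _
  rw [inv_mul_cancel₀ hΓc.ne'] at main
  apply Tendsto.congr' _ main
  filter_upwards [eventually_ge_atTop (0:ℝ)] with z hz
  -- step 1 : oneFone in integral form
  have h1 : oneFone α β z = (Real.Gamma β / (Real.Gamma α * Real.Gamma c)) *
      ∫ t in Ioo (0:ℝ) 1, Real.exp (z * t) * (t ^ (α - 1) * (1 - t) ^ (c - 1)) := by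
    rw [series_eq_integral hα hβ hab hz]
    field_simp
    rw [hc_def]
  -- step 2 : set integral to interval integral
  have h2 : ∫ t in Ioo (0:ℝ) 1, Real.exp (z * t) * (t ^ (α - 1) * (1 - t) ^ (c - 1))
      = ∫ t in (0:ℝ)..1, Real.exp (z * t) * (t ^ (α - 1) * (1 - t) ^ (c - 1)) := by
    rw [intervalIntegral.integral_of_le (by norm_num : (0:ℝ) ≤ 1),
      MeasureTheory.integral_Ioc_eq_integral_Ioo]
  -- step 3 : reflection substitution
  have h3 : ∫ t in (0:ℝ)..1, Real.exp (z * t) * (t ^ (α - 1) * (1 - t) ^ (c - 1))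
      = Real.exp z *
        ∫ u in (0:ℝ)..1, Real.exp (-(z * u)) * ((1 - u) ^ (α - 1) * u ^ (c - 1)) := by
    have hrefl := intervalIntegral.integral_comp_sub_left (a := 0) (b := 1) (d := 1)
      (fun t => Real.exp (z * t) * (t ^ (α - 1) * (1 - t) ^ (c - 1)))
    norm_num at hrefl
    rw [← hrefl, ← intervalIntegral.integral_const_mul]
    apply intervalIntegral.integral_congr
    intro u _
    have he : Real.exp (z * (1 - u)) = Real.exp z * Real.exp (-(z * u)) := by
      rw [← Real.exp_add]
      ring_nf
    beta_reduce
    rw [he]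
    ring
  rw [h1, h2, h3]
  have hez := Real.exp_ne_zero z
  rw [Real.exp_neg]
  field_simp
end

section
/- Let n ≥ 2, write elements of ℂ^{n+1} as z = (z_0, z_1, v) with v ∈ ℂ^{n−1}, and for u ∈ ℂ, v ∈ ℂ^{n−1} set z(u,v) := (u(1 − v·v)/2, i u(1 + v·v)/2, u v), where v·v = ∑_k v_k². Then z(u,v)·z(u,v) = 0 for all (u,v), and the pullback of the n-form (dz_1 ∧ dz_2 ∧ … ∧ dz_n)/z_0 under the map (u,v) ↦ z(u,v) equals i · u^{n−2} du ∧ dv_1 ∧ … ∧ dv_{n−1} (on the set where u ≠ 0 and v·v ≠ 1). -/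
/-- The holomorphic chart `(u,v) ↦ z(u,v) = (u(1−v·v)/2, iu(1+v·v)/2, uv)`
of the rank-one Kepler manifold of the spin factor, with `n = m + 2`. -/
noncomputable def keplerChart (m : ℕ) (p : ℂ × (Fin (m + 1) → ℂ)) : Fin (m + 3) → ℂ :=
  Fin.cons (p.1 * (1 - ∑ k, p.2 k ^ 2) / 2)
    (Fin.cons (Complex.I * p.1 * (1 + ∑ k, p.2 k ^ 2) / 2)
      (fun k => p.1 * p.2 k))

/-- Coordinate directions `(u, v_1, …, v_{n−1})` in the chart domain. -/
noncomputable def chartDir (m : ℕ) : Fin (m + 2) → ℂ × (Fin (m + 1) → ℂ) :=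
  Fin.cons (1, 0) (fun k => (0, Pi.single k 1))

section Aux

lemma keplerAux_fd_snd_k (m : ℕ) (k : Fin (m + 1)) (p : ℂ × (Fin (m + 1) → ℂ)) :
    HasFDerivAt (fun q : ℂ × (Fin (m + 1) → ℂ) => q.2 k)
      ((ContinuousLinearMap.proj k).comp (ContinuousLinearMap.snd ℂ ℂ _)) p :=
  (hasFDerivAt_apply (𝕜 := ℂ) k p.2).comp p (hasFDerivAt_snd (𝕜 := ℂ) (p := p))

lemma keplerAux_fd_sq (m : ℕ) (k : Fin (m + 1)) (u : ℂ) (v : Fin (m + 1) → ℂ) :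
    HasFDerivAt (fun q : ℂ × (Fin (m + 1) → ℂ) => q.2 k ^ 2)
      ((2 * v k) • ((ContinuousLinearMap.proj k).comp (ContinuousLinearMap.snd ℂ ℂ _)))
      (u, v) := by
  have h := (keplerAux_fd_snd_k m k (u, v)).fun_mul (keplerAux_fd_snd_k m k (u, v))
  have e : (fun q : ℂ × (Fin (m + 1) → ℂ) => q.2 k ^ 2)
      = fun q : ℂ × (Fin (m + 1) → ℂ) => q.2 k * q.2 k := by
    funext q; ring
  rw [e]
  refine h.congr_fderiv (ContinuousLinearMap.ext fun x => ?_)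
  simp only [ContinuousLinearMap.add_apply, ContinuousLinearMap.smul_apply, smul_eq_mul]
  ring

lemma keplerAux_fd_sum (m : ℕ) (u : ℂ) (v : Fin (m + 1) → ℂ) :
    HasFDerivAt (fun q : ℂ × (Fin (m + 1) → ℂ) => ∑ k, q.2 k ^ 2)
      (∑ k, (2 * v k) • ((ContinuousLinearMap.proj (R := ℂ) (φ := fun _ : Fin (m + 1) => ℂ) k).comp (ContinuousLinearMap.snd ℂ ℂ _)))
      (u, v) :=
  HasFDerivAt.fun_sum (fun k _ => keplerAux_fd_sq m k u v)

lemma keplerAux_fd1 (m : ℕ) (u : ℂ) (v : Fin (m + 1) → ℂ) (d : ℂ × (Fin (m + 1) → ℂ)) :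
    fderiv ℂ (fun q : ℂ × (Fin (m + 1) → ℂ) => Complex.I * q.1 * (1 + ∑ k, q.2 k ^ 2) / 2)
      (u, v) d
    = Complex.I * d.1 * (1 + ∑ k, v k ^ 2) / 2
        + Complex.I * u * (∑ k, v k * d.2 k) := by
  have h := (((hasFDerivAt_fst (𝕜 := ℂ) (p := (u, v))).const_mul Complex.I).fun_mul
    ((keplerAux_fd_sum m u v).const_add 1)).mul_const ((2 : ℂ)⁻¹)
  have e : (fun q : ℂ × (Fin (m + 1) → ℂ) => Complex.I * q.1 * (1 + ∑ k, q.2 k ^ 2) / 2)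
      = fun q : ℂ × (Fin (m + 1) → ℂ) => Complex.I * q.1 * (1 + ∑ k, q.2 k ^ 2) * (2 : ℂ)⁻¹ := by
    funext q; ring
  rw [e, h.fderiv]
  simp only [ContinuousLinearMap.smul_apply, ContinuousLinearMap.add_apply,
    ContinuousLinearMap.sum_apply, ContinuousLinearMap.comp_apply,
    ContinuousLinearMap.proj_apply, ContinuousLinearMap.coe_fst', ContinuousLinearMap.coe_snd',
    smul_eq_mul]
  have hx : ∑ k : Fin (m + 1), 2 * v k * d.2 k = 2 * ∑ k, v k * d.2 k := by
    rw [Finset.mul_sum]; exact Finset.sum_congr rfl fun k _ => by ring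
  rw [hx]
  ring

lemma keplerAux_fd2 (m : ℕ) (k : Fin (m + 1)) (u : ℂ) (v : Fin (m + 1) → ℂ)
    (d : ℂ × (Fin (m + 1) → ℂ)) :
    fderiv ℂ (fun q : ℂ × (Fin (m + 1) → ℂ) => q.1 * q.2 k) (u, v) d
    = d.1 * v k + u * d.2 k := by
  have h := (hasFDerivAt_fst (𝕜 := ℂ) (p := (u, v))).fun_mul (keplerAux_fd_snd_k m k (u, v))
  rw [h.fderiv]
  simp only [ContinuousLinearMap.smul_apply, ContinuousLinearMap.add_apply,
    ContinuousLinearMap.comp_apply, ContinuousLinearMap.proj_apply,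
    ContinuousLinearMap.coe_fst', ContinuousLinearMap.coe_snd', smul_eq_mul]
  ring

/-- The index equivalence `Fin (m+2) ≃ Fin 1 ⊕ Fin (m+1)` sending `0 ↦ inl 0`,
`i.succ ↦ inr i`. -/
def keplerAux_eqv (m : ℕ) : Fin (m + 2) ≃ Fin 1 ⊕ Fin (m + 1) where
  toFun := Fin.cases (Sum.inl 0) Sum.inr
  invFun := Sum.elim (fun _ => 0) Fin.succ
  left_inv i := by induction i using Fin.cases <;> simp
  right_inv x := by
    rcases x with x | x
    · simp [Subsingleton.elim x 0]
    · simp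

end Aux

/-- With `n = m + 2`: the chart lands in the null cone `z·z = 0`, and the pullback of
the invariant `n`-form `(dz_1 ∧ … ∧ dz_n)/z_0` under `(u,v) ↦ z(u,v)` equals
`i·u^{n−2} du ∧ dv_1 ∧ … ∧ dv_{n−1}` (where `u ≠ 0` and `v·v ≠ 1`); i.e. the Jacobian
determinant of `(u,v) ↦ (z_1,…,z_n)` equals `i·u^{n−2}·z_0(u,v)`. -/
theorem keplerChart_null_and_form_pullback (m : ℕ) (u : ℂ) (v : Fin (m + 1) → ℂ) :
    (∑ k, keplerChart m (u, v) k * keplerChart m (u, v) k) = 0 ∧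
      (u ≠ 0 → (∑ k, v k ^ 2) ≠ 1 →
        Matrix.det (Matrix.of fun i j : Fin (m + 2) =>
            fderiv ℂ (fun p => keplerChart m p i.succ) (u, v) (chartDir m j)) =
          Complex.I * u ^ m * keplerChart m (u, v) 0) := by
  constructor
  · -- the null-cone identity
    rw [Fin.sum_univ_succ, Fin.sum_univ_succ]
    simp only [keplerChart, Fin.cons_zero, Fin.cons_succ]
    have hsum : ∑ k : Fin (m + 1), (u * v k) * (u * v k) = u ^ 2 * ∑ k, v k ^ 2 := by
      rw [Finset.mul_sum]; exact Finset.sum_congr rfl fun k _ => by ring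
    rw [hsum]
    linear_combination (u ^ 2 * (1 + ∑ k, v k ^ 2) ^ 2 / 4) * Complex.I_sq
  · intro hu _
    set s : ℂ := ∑ k, v k ^ 2 with hs
    set A : Matrix (Fin 1) (Fin 1) ℂ := Matrix.of fun _ _ => Complex.I * (1 + s) / 2 with hA
    set B : Matrix (Fin 1) (Fin (m + 1)) ℂ := Matrix.of fun _ j => Complex.I * u * v j with hB
    set C : Matrix (Fin (m + 1)) (Fin 1) ℂ := Matrix.of fun i _ => v i with hC
    have hM : (Matrix.of fun i j : Fin (m + 2) =>
          fderiv ℂ (fun p => keplerChart m p i.succ) (u, v) (chartDir m j))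
        = (Matrix.fromBlocks A B C (u • 1)).submatrix (keplerAux_eqv m) (keplerAux_eqv m) := by
      ext i j
      simp only [Matrix.of_apply, Matrix.submatrix_apply]
      induction i using Fin.cases with
      | zero =>
          have hfun : (fun p : ℂ × (Fin (m + 1) → ℂ) => keplerChart m p (Fin.succ 0))
              = fun p : ℂ × (Fin (m + 1) → ℂ)
                  => Complex.I * p.1 * (1 + ∑ k, p.2 k ^ 2) / 2 := by
            funext p
            simp [keplerChart, Fin.cons_succ]
          rw [hfun, keplerAux_fd1]
          induction j using Fin.cases with
          | zero =>
              simp [keplerAux_eqv, chartDir, Matrix.fromBlocks, hA, hs]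
          | succ jj =>
              simp [keplerAux_eqv, chartDir, Matrix.fromBlocks, hB, Pi.single_apply,
                mul_ite, Finset.sum_ite_eq']
      | succ ii =>
          have hfun : (fun p : ℂ × (Fin (m + 1) → ℂ) => keplerChart m p (Fin.succ (Fin.succ ii)))
              = fun p : ℂ × (Fin (m + 1) → ℂ) => p.1 * p.2 ii := by
            funext p
            simp [keplerChart, Fin.cons_succ]
          rw [hfun, keplerAux_fd2]
          induction j using Fin.cases with
          | zero =>
              simp [keplerAux_eqv, chartDir, Matrix.fromBlocks, hC]
          | succ jj =>
              simp [keplerAux_eqv, chartDir, Matrix.fromBlocks, Matrix.smul_apply,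
                Matrix.one_apply, Pi.single_apply, mul_ite, eq_comm]
    rw [hM, Matrix.det_submatrix_equiv_self]
    have key : Matrix.fromBlocks A B C (u • (1 : Matrix (Fin (m + 1)) (Fin (m + 1)) ℂ))
        = Matrix.fromBlocks 1 0 0 (u • (1 : Matrix (Fin (m + 1)) (Fin (m + 1)) ℂ))
            * Matrix.fromBlocks A B (u⁻¹ • C) 1 := by
      rw [Matrix.fromBlocks_multiply]
      simp [Matrix.smul_mul, smul_smul, mul_inv_cancel₀ hu, inv_mul_cancel₀ hu]
    rw [key, Matrix.det_mul, Matrix.det_fromBlocks_zero₂₁, Matrix.det_fromBlocks_one₂₂,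
      Matrix.det_one, Matrix.det_smul, Matrix.det_one, one_mul, mul_one]
    have hsum : ∑ j : Fin (m + 1), B 0 j * (u⁻¹ • C) j 0
        = Complex.I * (u * u⁻¹) * s := by
      rw [hs, Finset.mul_sum]
      exact Finset.sum_congr rfl fun j _ => by
        simp [hB, hC, Matrix.smul_apply]; ring
    have hdet1 : (A - B * (u⁻¹ • C)).det = Complex.I * (1 + s) / 2 - Complex.I * s := by
      rw [Matrix.det_fin_one]
      simp only [Matrix.sub_apply, Matrix.mul_apply]
      rw [hsum, mul_inv_cancel₀ hu]
      simp [hA]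
    rw [hdet1]
    simp only [keplerChart, Fin.cons_zero, Fintype.card_fin, ← hs]
    rw [pow_succ]
    ring
end
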